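/- Let A ∈ ℝ^{n×n}, B ∈ ℝ^{n×p}, R ∈ ℝ^{p×p} symmetric positive semidefinite, integers t₀ < N, symmetric positive semidefinite matrices Q_t (t₀ ≤ t ≤ N−1), and let V_t, K_t be given by the backward Riccati recursion V_{N−1} = Q_{N−1}, K_t = −(B'V_tB + R)⁻¹B'V_tA (assuming B'V_tB + R invertible), V_{t−1} = (A + BK_t)'V_t(A + BK_t) + Q_{t−1} + K_t'RK_t, and let Ψ_{k₁:k₂} := (A + BK_{k₁})⋯(A + BK_{k₂+1}) with Ψ_{k:k} = I. Then for all k₁ ≥ k₂ ≥ t₀ with N−1 ≥ k₁: V_{k₂} ⪰ Ψ_{k₁:k₂}' V_{k₁} Ψ_{k₁:k₂}. -/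

import Mathlib

open Matrix

/-- **Step 2 in the proof of Lemma 6.** Since each Riccati step adds a positive semidefinite
term, the recursion dominates, in the Loewner order, the closed-loop congruence of any later
iterate. -/
theorem stmt_13 {n p : ℕ}
    (A : Matrix (Fin n) (Fin n) ℝ) (B : Matrix (Fin n) (Fin p) ℝ)
    (R : Matrix (Fin p) (Fin p) ℝ) (hR : R.PosSemidef)
    (t₀ N : ℤ) (ht₀N : t₀ < N)
    (Q : ℤ → Matrix (Fin n) (Fin n) ℝ)
    (hQ : ∀ t, t₀ ≤ t → t ≤ N - 1 → (Q t).PosSemidef)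
    -- backward Riccati recursion (closed-loop form)
    (V : ℤ → Matrix (Fin n) (Fin n) ℝ) (K : ℤ → Matrix (Fin p) (Fin n) ℝ)
    (hVN : V (N - 1) = Q (N - 1))
    (hinv : ∀ t, t₀ < t → t ≤ N - 1 → IsUnit (Bᵀ * V t * B + R))
    (hK : ∀ t, t₀ < t → t ≤ N - 1 → K t = -((Bᵀ * V t * B + R)⁻¹ * (Bᵀ * V t * A)))
    (hV : ∀ t, t₀ < t → t ≤ N - 1 →
      V (t - 1) = (A + B * K t)ᵀ * V t * (A + B * K t) + Q (t - 1) + (K t)ᵀ * R * K t)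
    -- closed-loop transition products
    (Ψ : ℤ → ℤ → Matrix (Fin n) (Fin n) ℝ)
    (hΨdiag : ∀ k, Ψ k k = 1)
    (hΨ : ∀ k₁ k₂, t₀ ≤ k₂ → k₂ ≤ k₁ → k₁ ≤ N - 2 →
      Ψ (k₁ + 1) k₂ = (A + B * K (k₁ + 1)) * Ψ k₁ k₂) :
    ∀ k₁ k₂, t₀ ≤ k₂ → k₂ ≤ k₁ → k₁ ≤ N - 1 →
      (V k₂ - (Ψ k₁ k₂)ᵀ * V k₁ * Ψ k₁ k₂).PosSemidef := by
  intro k₁ k₂ h₂ hle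
  refine Int.le_induction (motive := fun k _ => k ≤ N - 1 → (V k₂ - (Ψ k k₂)ᵀ * V k * Ψ k k₂).PosSemidef) ?_ (fun k₁ hk₁ ih hN => ?_) k₁ hle
  · intro _
    rw [hΨdiag]
    simpa using Matrix.PosSemidef.zero (n := Fin n) (R := ℝ)
  · have ih2 := ih
    have hk₁N : k₁ ≤ N - 2 := by omega
    have ih' := ih (by omega : k₁ ≤ N - 1)
    have hrec := hV (k₁ + 1) (by omega) (by omega)
    have hQk : (Q k₁).PosSemidef := hQ k₁ (by omega) (by omega)
    rw [hΨ k₁ k₂ h₂ hk₁ hk₁N]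
    have hVk1 : V k₁ = (A + B * K (k₁ + 1))ᵀ * V (k₁ + 1) * (A + B * K (k₁ + 1))
        + Q k₁ + (K (k₁ + 1))ᵀ * R * (K (k₁ + 1)) := by
      simpa using hrec
    have key : V k₂ - ((A + B * K (k₁ + 1)) * Ψ k₁ k₂)ᵀ * V (k₁ + 1) *
        ((A + B * K (k₁ + 1)) * Ψ k₁ k₂)
        = (V k₂ - (Ψ k₁ k₂)ᵀ * V k₁ * Ψ k₁ k₂)
          + (Ψ k₁ k₂)ᵀ * (Q k₁) * Ψ k₁ k₂
          + (Ψ k₁ k₂)ᵀ * ((K (k₁ + 1))ᵀ * R * (K (k₁ + 1))) * Ψ k₁ k₂ := by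
      rw [hVk1]
      simp only [Matrix.transpose_mul, Matrix.transpose_add]
      noncomm_ring
    rw [key]
    have congr1 : ((Ψ k₁ k₂)ᵀ * (Q k₁) * Ψ k₁ k₂).PosSemidef := by
      simpa using hQk.conjTranspose_mul_mul_same (Ψ k₁ k₂)
    have congr2 : ((Ψ k₁ k₂)ᵀ * ((K (k₁ + 1))ᵀ * R * (K (k₁ + 1))) * Ψ k₁ k₂).PosSemidef := by
      have hKR : ((K (k₁ + 1))ᵀ * R * (K (k₁ + 1))).PosSemidef := by
        simpa using hR.conjTranspose_mul_mul_same (K (k₁ + 1))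
      simpa using hKR.conjTranspose_mul_mul_same (Ψ k₁ k₂)
    exact (ih'.add congr1).add congr2
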